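/- Let σ₀ ∈ ℝ[x₁,…,xₙ] be a sum of squares, let c > 0 be a real number, and set g = σ₀ + c. Then for every polynomial p ∈ ℝ[x₁,…,xₙ] and every real ε > 0 there exist a sum of squares τ and a polynomial h such that p + ε = τ + h·(p·g); and likewise there exist a sum of squares τ' and a polynomial h' such that −p + ε = τ' + h'·(p·g). -/

import Mathlib

/-- A polynomial is a sum of squares. -/
def IsSOS {n : ℕ} (σ : MvPolynomial (Fin n) ℝ) : Prop :=
  ∃ (t : ℕ) (s : Fin t → MvPolynomial (Fin n) ℝ), σ = ∑ i, (s i) ^ 2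

theorem statement6 (n : ℕ) (σ₀ : MvPolynomial (Fin n) ℝ) (hσ₀ : IsSOS σ₀)
    (c : ℝ) (hc : 0 < c) (g : MvPolynomial (Fin n) ℝ)
    (hg : g = σ₀ + MvPolynomial.C c)
    (p : MvPolynomial (Fin n) ℝ) (ε : ℝ) (hε : 0 < ε) :
    (∃ τ h : MvPolynomial (Fin n) ℝ, IsSOS τ ∧
      p + MvPolynomial.C ε = τ + h * (p * g)) ∧
    (∃ τ' h' : MvPolynomial (Fin n) ℝ, IsSOS τ' ∧
      -p + MvPolynomial.C ε = τ' + h' * (p * g)) := by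
  obtain ⟨t, s, hs⟩ := hσ₀
  subst hg hs
  set C := (MvPolynomial.C : ℝ →+* MvPolynomial (Fin n) ℝ)
  set a : ℝ := Real.sqrt (1/(4*ε)) with ha
  set b : ℝ := Real.sqrt (1/(4*c*ε)) with hb
  have ha2 : a^2 = 1/(4*ε) := Real.sq_sqrt (by positivity)
  have hb2 : b^2 = 1/(4*c*ε) := Real.sq_sqrt (by positivity)
  have g1 : (C b)^2 * C c = (C a)^2 := by
    rw [← map_pow, ← map_pow, ← map_mul]
    exact congrArg C (by rw [ha2, hb2]; field_simp)
  have g2 : 2 * (C a)^2 * C (2*ε) = 1 := by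
    rw [← map_pow, ← map_ofNat C 2, ← map_mul, ← map_mul, ← map_one C]
    exact congrArg C (by rw [ha2]; field_simp; ring)
  have g3 : (C a)^2 * (C (2*ε))^2 = C ε := by
    rw [← map_pow, ← map_pow, ← map_mul]
    exact congrArg C (by rw [ha2]; field_simp; ring)
  have hsum : ∀ q : MvPolynomial (Fin n) ℝ,
      ∑ i, (C b * q * s i)^2 = (C b)^2 * q^2 * ∑ i, (s i)^2 := by
    intro q
    rw [Finset.mul_sum]
    exact Finset.sum_congr rfl fun i _ => by ring
  constructor
  · refine ⟨(C a * (p + C (2*ε)))^2 + ∑ i, (C b * p * s i)^2,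
      -((C b)^2) * p, ⟨t+1, Fin.cons (C a * (p + C (2*ε))) (fun i => C b * p * s i), ?_⟩, ?_⟩
    · simp [Fin.sum_univ_succ]
    · rw [hsum]
      linear_combination p^2 * g1 - p * g2 - g3
  · refine ⟨(C a * (p - C (2*ε)))^2 + ∑ i, (C b * p * s i)^2,
      -((C b)^2) * p, ⟨t+1, Fin.cons (C a * (p - C (2*ε))) (fun i => C b * p * s i), ?_⟩, ?_⟩
    · simp [Fin.sum_univ_succ]
    · rw [hsum]
      linear_combination p^2 * g1 + p * g2 - g3
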